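/- Under the GT-SAGA setup, for every k ≥ 0, almost surely E[‖ḡ^k‖² | F^k] ≤ (2L²/n²)·‖x^k − Jx^k‖² + (2L²/n)·t^k + ‖∇f̄(x^k)‖². -/

import Mathlib

open MeasureTheory ProbabilityTheory Finset Filter
open scoped ENNReal RealInnerProductSpace

noncomputable section

/-- The second largest singular value of a doubly stochastic matrix `w`, realized as the
operator norm of `w - (1/n) 𝟙ₙ 𝟙ₙᵀ` acting on `EuclideanSpace ℝ (Fin n)`. -/
def secondSV {n : ℕ} (w : Matrix (Fin n) (Fin n) ℝ) : ℝ :=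
  ‖LinearMap.toContinuousLinearMap
      (Matrix.toEuclideanLin (w - Matrix.of fun _ _ => (n : ℝ)⁻¹))‖

/-- The average `(1/n) ∑ᵢ vᵢ` of the blocks of a stacked vector `v ∈ ℝ^{np}`. -/
def blockAvg {n p : ℕ} (v : Fin n → EuclideanSpace ℝ (Fin p)) : EuclideanSpace ℝ (Fin p) :=
  (n : ℝ)⁻¹ • ∑ i, v i

/-- `‖v - J v‖²` for a stacked vector `v ∈ ℝ^{np}`, where `J = ((1/n) 𝟙ₙ 𝟙ₙᵀ) ⊗ Iₚ`. -/
def consSq {n p : ℕ} (v : Fin n → EuclideanSpace ℝ (Fin p)) : ℝ :=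
  ∑ i, ‖v i - blockAvg v‖ ^ 2

/-- `(W - J) v`, blockwise, where `W = w ⊗ Iₚ` and `J = ((1/n) 𝟙ₙ 𝟙ₙᵀ) ⊗ Iₚ`. -/
def WJapp {n p : ℕ} (w : Matrix (Fin n) (Fin n) ℝ) (v : Fin n → EuclideanSpace ℝ (Fin p)) :
    Fin n → EuclideanSpace ℝ (Fin p) :=
  fun i => (∑ r, w i r • v r) - blockAvg v

/-- The local batch function `fᵢ := (1/m) ∑ⱼ f_{i,j}`. -/
def floc {n m p : ℕ} (f : Fin n → Fin m → EuclideanSpace ℝ (Fin p) → ℝ) (i : Fin n) :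
    EuclideanSpace ℝ (Fin p) → ℝ :=
  fun u => (m : ℝ)⁻¹ * ∑ j, f i j u

/-- The global function `F := (1/n) ∑ᵢ fᵢ`. -/
def fglob {n m p : ℕ} (f : Fin n → Fin m → EuclideanSpace ℝ (Fin p) → ℝ) :
    EuclideanSpace ℝ (Fin p) → ℝ :=
  fun u => (n : ℝ)⁻¹ * ∑ i, floc f i u

/-- `F* := inf_x F(x)`. -/
def Fstar {n m p : ℕ} (f : Fin n → Fin m → EuclideanSpace ℝ (Fin p) → ℝ) : ℝ :=
  ⨅ u, fglob f u

/-- `∇f̄(x) := (1/n) ∑ᵢ ∇fᵢ(xᵢ)`. -/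
def gradfbar {n m p : ℕ} (f : Fin n → Fin m → EuclideanSpace ℝ (Fin p) → ℝ)
    (v : Fin n → EuclideanSpace ℝ (Fin p)) : EuclideanSpace ℝ (Fin p) :=
  (n : ℝ)⁻¹ • ∑ i, gradient (floc f i) (v i)

/-- The auxiliary quantity `t := (1/n) ∑ᵢ (1/m) ∑ⱼ ‖x̄ - z_{i,j}‖²`. -/
def tAux {n m p : ℕ} (xbar : EuclideanSpace ℝ (Fin p))
    (z : Fin n → Fin m → EuclideanSpace ℝ (Fin p)) : ℝ :=
  (n : ℝ)⁻¹ * ∑ i, (m : ℝ)⁻¹ * ∑ j, ‖xbar - z i j‖ ^ 2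

/-- The filtration `F^k := σ(τᵢᵗ, sᵢᵗ : i ∈ V, t ≤ k-1)`, with `F⁰` trivial. -/
def gtFilt {Ω : Type*} {n m : ℕ} (τ s : Fin n → ℕ → Ω → Fin m) (k : ℕ) :
    MeasurableSpace Ω :=
  ⨆ (i : Fin n) (t : ℕ) (_ : t < k),
    MeasurableSpace.comap (τ i t) ⊤ ⊔ MeasurableSpace.comap (s i t) ⊤

section InnerAux
variable {E : Type*} [NormedAddCommGroup E] [InnerProductSpace ℝ E]

lemma norm_sum_sq_eq {n : ℕ} (v : Fin n → E) :
    ‖∑ i, v i‖ ^ 2 = ∑ i, ∑ i', ⟪v i, v i'⟫ := by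
  rw [← real_inner_self_eq_norm_sq, sum_inner]
  exact Finset.sum_congr rfl fun i _ => inner_sum _ _ _

lemma var_identity {m : ℕ} (hm : (m : ℝ) ≠ 0) (u : Fin m → E) :
    ∑ j, ‖u j - (m : ℝ)⁻¹ • ∑ j', u j'‖ ^ 2
      = ∑ j, ‖u j‖ ^ 2 - (m : ℝ) * ‖(m : ℝ)⁻¹ • ∑ j', u j'‖ ^ 2 := by
  set ub := (m : ℝ)⁻¹ • ∑ j', u j' with hub
  have hsum : ∑ j', u j' = (m : ℝ) • ub := by
    rw [hub, smul_smul, mul_inv_cancel₀ hm, one_smul]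
  have h1 : ∀ j, ‖u j - ub‖ ^ 2 = ‖u j‖ ^ 2 - 2 * ⟪u j, ub⟫ + ‖ub‖ ^ 2 :=
    fun j => norm_sub_sq_real _ _
  rw [Finset.sum_congr rfl fun j _ => h1 j]
  rw [Finset.sum_add_distrib, Finset.sum_sub_distrib, ← Finset.mul_sum, ← sum_inner, hsum,
    real_inner_smul_left, real_inner_self_eq_norm_sq, Finset.sum_const, Finset.card_univ,
    Fintype.card_fin, nsmul_eq_mul]
  ring

lemma var_le {m : ℕ} (hm : (m : ℝ) ≠ 0) (u : Fin m → E) :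
    ∑ j, ‖u j - (m : ℝ)⁻¹ • ∑ j', u j'‖ ^ 2 ≤ ∑ j, ‖u j‖ ^ 2 := by
  rw [var_identity hm u]
  have : 0 ≤ (m : ℝ) * ‖(m : ℝ)⁻¹ • ∑ j', u j'‖ ^ 2 := by positivity
  linarith

end InnerAux

lemma grad_floc {n m p : ℕ} (f : Fin n → Fin m → EuclideanSpace ℝ (Fin p) → ℝ)
    (hdiff : ∀ i j, Differentiable ℝ (f i j)) (i : Fin n) (u : EuclideanSpace ℝ (Fin p)) :
    gradient (floc f i) u = (m : ℝ)⁻¹ • ∑ j, gradient (f i j) u := by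
  have h1 : fderiv ℝ (fun v => ∑ j, f i j v) u = ∑ j, fderiv ℝ (f i j) u :=
    fderiv_fun_sum fun j _ => (hdiff i j).differentiableAt
  have h2 : fderiv ℝ (floc f i) u = (m : ℝ)⁻¹ • fderiv ℝ (fun v => ∑ j, f i j v) u := by
    have hd : DifferentiableAt ℝ (fun v => ∑ j, f i j v) u :=
      DifferentiableAt.fun_sum fun j _ => (hdiff i j).differentiableAt
    have := fderiv_const_mul hd ((m : ℝ)⁻¹)
    exact this
  simp only [gradient, h2, h1]
  rw [_root_.map_smul, map_sum]

set_option maxHeartbeats 1000000 in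
lemma detStep {n m p : ℕ} (hn : 1 ≤ n) (hm : 1 ≤ m) (L : ℝ) (hL : 0 ≤ L)
    (f : Fin n → Fin m → EuclideanSpace ℝ (Fin p) → ℝ)
    (hdiff : ∀ i j, Differentiable ℝ (f i j))
    (hlipn : ∀ i j a b, ‖gradient (f i j) a - gradient (f i j) b‖ ≤ L * ‖a - b‖)
    (X : Fin n → EuclideanSpace ℝ (Fin p)) (Z : Fin n → Fin m → EuclideanSpace ℝ (Fin p))
    (a : Fin n → Fin m → EuclideanSpace ℝ (Fin p))
    (ha : ∀ i j, a i j = gradient (f i j) (X i) - gradient (f i j) (Z i j)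
      + (m : ℝ)⁻¹ • ∑ j', gradient (f i j') (Z i j')) :
    ((n : ℝ)⁻¹) ^ 2 * ∑ i, ∑ i', ∑ j, ∑ j',
        (if i = i' then (if j = j' then (m : ℝ)⁻¹ else 0) else (m : ℝ)⁻¹ * (m : ℝ)⁻¹)
          * ⟪a i j, a i' j'⟫
      ≤ 2 * L ^ 2 / n ^ 2 * consSq X + 2 * L ^ 2 / n * tAux (blockAvg X) Z
        + ‖gradfbar f X‖ ^ 2 := by
  have hm0 : (m : ℝ) ≠ 0 := Nat.cast_ne_zero.mpr (by omega)
  have hn0 : (n : ℝ) ≠ 0 := Nat.cast_ne_zero.mpr (by omega)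
  set abar : Fin n → EuclideanSpace ℝ (Fin p) := fun i => (m : ℝ)⁻¹ • ∑ j, a i j with habar_def
  set u : Fin n → Fin m → EuclideanSpace ℝ (Fin p) :=
    fun i j => gradient (f i j) (X i) - gradient (f i j) (Z i j) with hu_def
  set v : Fin n → EuclideanSpace ℝ (Fin p) :=
    fun i => (m : ℝ)⁻¹ • ∑ j', gradient (f i j') (Z i j') with hv_def
  have hav : ∀ i j, a i j = u i j + v i := fun i j => ha i j
  -- the average of a i · equals gradient (floc f i) (X i)
  have hsuma : ∀ i, ∑ j, a i j = ∑ j, gradient (f i j) (X i) := by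
    intro i
    have : ∑ j, a i j = ∑ j, gradient (f i j) (X i) - ∑ j, gradient (f i j) (Z i j)
        + (m : ℝ) • v i := by
      simp only [hav, hu_def]
      rw [Finset.sum_add_distrib, Finset.sum_sub_distrib, Finset.sum_const, Finset.card_univ,
        Fintype.card_fin, ← Nat.cast_smul_eq_nsmul ℝ]
    rw [this, hv_def, smul_smul, mul_inv_cancel₀ hm0, one_smul]
    abel
  have habar : ∀ i, abar i = gradient (floc f i) (X i) := by
    intro i
    rw [habar_def]
    simp only
    rw [hsuma i, ← grad_floc f hdiff i (X i)]
  -- diagonal evaluation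
  have hdiag : ∀ i : Fin n, (∑ j, ∑ j',
      (if i = i then (if j = j' then (m : ℝ)⁻¹ else 0) else (m : ℝ)⁻¹ * (m : ℝ)⁻¹)
        * ⟪a i j, a i j'⟫) = (m : ℝ)⁻¹ * ∑ j, ‖a i j‖ ^ 2 := by
    intro i
    simp only [eq_self_iff_true, if_true, ite_mul, zero_mul]
    rw [Finset.mul_sum]
    refine Finset.sum_congr rfl fun j _ => ?_
    rw [Finset.sum_ite_eq Finset.univ j (fun j' => (m : ℝ)⁻¹ * ⟪a i j, a i j'⟫)]
    rw [if_pos (Finset.mem_univ j), real_inner_self_eq_norm_sq]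
  -- off-diagonal evaluation
  have hoff : ∀ i i' : Fin n, i ≠ i' → (∑ j, ∑ j',
      (if i = i' then (if j = j' then (m : ℝ)⁻¹ else 0) else (m : ℝ)⁻¹ * (m : ℝ)⁻¹)
        * ⟪a i j, a i' j'⟫) = ⟪abar i, abar i'⟫ := by
    intro i i' hne
    simp only [if_neg hne]
    rw [habar_def]
    simp only
    rw [real_inner_smul_left, real_inner_smul_right, sum_inner]
    rw [Finset.mul_sum, Finset.mul_sum]
    refine Finset.sum_congr rfl fun j _ => ?_
    rw [inner_sum, Finset.mul_sum, Finset.mul_sum]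
    refine Finset.sum_congr rfl fun j' _ => ?_
    ring
  -- combine
  have hsplit : (∑ i, ∑ i', ∑ j, ∑ j',
      (if i = i' then (if j = j' then (m : ℝ)⁻¹ else 0) else (m : ℝ)⁻¹ * (m : ℝ)⁻¹)
        * ⟪a i j, a i' j'⟫)
      = ‖∑ i, abar i‖ ^ 2 + ∑ i, ((m : ℝ)⁻¹ * ∑ j, ‖a i j‖ ^ 2 - ‖abar i‖ ^ 2) := by
    have h1 : ∀ i i' : Fin n, (∑ j, ∑ j',
        (if i = i' then (if j = j' then (m : ℝ)⁻¹ else 0) else (m : ℝ)⁻¹ * (m : ℝ)⁻¹)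
          * ⟪a i j, a i' j'⟫)
        = ⟪abar i, abar i'⟫
          + (if i = i' then ((m : ℝ)⁻¹ * ∑ j, ‖a i' j‖ ^ 2 - ‖abar i'‖ ^ 2) else 0) := by
      intro i i'
      by_cases h : i = i'
      · subst h
        rw [hdiag i, if_pos rfl, real_inner_self_eq_norm_sq]
        ring
      · rw [hoff i i' h, if_neg h]
        ring
    rw [Finset.sum_congr rfl fun i _ => Finset.sum_congr rfl fun i' _ => h1 i i',
      norm_sum_sq_eq]
    have h2 : ∀ i : Fin n, (∑ i', (⟪abar i, abar i'⟫
        + (if i = i' then ((m : ℝ)⁻¹ * ∑ j, ‖a i' j‖ ^ 2 - ‖abar i'‖ ^ 2) else 0)))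
        = (∑ i', ⟪abar i, abar i'⟫) + ((m : ℝ)⁻¹ * ∑ j, ‖a i j‖ ^ 2 - ‖abar i‖ ^ 2) := by
      intro i
      rw [Finset.sum_add_distrib,
        Finset.sum_ite_eq Finset.univ i (fun i' => (m : ℝ)⁻¹ * ∑ j, ‖a i' j‖ ^ 2 - ‖abar i'‖ ^ 2),
        if_pos (Finset.mem_univ i)]
    rw [Finset.sum_congr rfl fun i _ => h2 i, Finset.sum_add_distrib]
  -- variance bound for each node
  set Xb := blockAvg X with hXb
  have hD : ∀ i : Fin n, (m : ℝ)⁻¹ * ∑ j, ‖a i j‖ ^ 2 - ‖abar i‖ ^ 2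
      ≤ (m : ℝ)⁻¹ * ∑ j, (2 * L ^ 2 * ‖X i - Xb‖ ^ 2 + 2 * L ^ 2 * ‖Xb - Z i j‖ ^ 2) := by
    intro i
    have hvar : ∑ j, ‖a i j - abar i‖ ^ 2 = ∑ j, ‖a i j‖ ^ 2 - (m : ℝ) * ‖abar i‖ ^ 2 :=
      var_identity hm0 (a i)
    have hid : (m : ℝ)⁻¹ * ∑ j, ‖a i j‖ ^ 2 - ‖abar i‖ ^ 2
        = (m : ℝ)⁻¹ * ∑ j, ‖a i j - abar i‖ ^ 2 := by
      rw [hvar]; field_simp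
    rw [hid]
    have hau : ∀ j, a i j - abar i = u i j - (m : ℝ)⁻¹ • ∑ j', u i j' := by
      intro j
      have habar2 : abar i = ((m : ℝ)⁻¹ • ∑ j', u i j') + v i := by
        rw [habar_def]
        simp only
        have : ∑ j', a i j' = (∑ j', u i j') + (m : ℝ) • v i := by
          rw [Finset.sum_congr rfl fun j' _ => hav i j', Finset.sum_add_distrib,
            Finset.sum_const, Finset.card_univ, Fintype.card_fin,
            Nat.cast_smul_eq_nsmul ℝ]
        rw [this, smul_add, smul_smul, inv_mul_cancel₀ hm0, one_smul]
      rw [habar2, hav i j]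
      abel
    rw [Finset.sum_congr rfl fun j _ => congrArg (fun w => ‖w‖ ^ 2) (hau j)]
    have hle1 : ∑ j, ‖u i j - (m : ℝ)⁻¹ • ∑ j', u i j'‖ ^ 2 ≤ ∑ j, ‖u i j‖ ^ 2 :=
      var_le hm0 (u i)
    have hle2 : ∑ j, ‖u i j‖ ^ 2
        ≤ ∑ j, (2 * L ^ 2 * ‖X i - Xb‖ ^ 2 + 2 * L ^ 2 * ‖Xb - Z i j‖ ^ 2) := by
      refine Finset.sum_le_sum fun j _ => ?_
      have h1 : ‖u i j‖ ≤ L * ‖X i - Z i j‖ := hlipn i j (X i) (Z i j)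
      have h2 : ‖X i - Z i j‖ ≤ ‖X i - Xb‖ + ‖Xb - Z i j‖ := by
        have := norm_add_le (X i - Xb) (Xb - Z i j)
        simpa using this
      have h3 : (0:ℝ) ≤ ‖u i j‖ := norm_nonneg _
      have h4 : (0:ℝ) ≤ ‖X i - Z i j‖ := norm_nonneg _
      have hsq1 : ‖u i j‖ ^ 2 ≤ L ^ 2 * ‖X i - Z i j‖ ^ 2 := by
        have h7 := mul_le_mul h1 h1 h3 (by positivity : (0:ℝ) ≤ L * ‖X i - Z i j‖)
        calc ‖u i j‖ ^ 2 = ‖u i j‖ * ‖u i j‖ := sq (‖u i j‖)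
          _ ≤ (L * ‖X i - Z i j‖) * (L * ‖X i - Z i j‖) := h7
          _ = L ^ 2 * ‖X i - Z i j‖ ^ 2 := by ring
      have hsq2 : ‖X i - Z i j‖ ^ 2 ≤ 2 * ‖X i - Xb‖ ^ 2 + 2 * ‖Xb - Z i j‖ ^ 2 := by
        have h8 : ‖X i - Z i j‖ ^ 2 ≤ (‖X i - Xb‖ + ‖Xb - Z i j‖) ^ 2 :=
          pow_le_pow_left₀ h4 h2 2
        nlinarith [sq_nonneg (‖X i - Xb‖ - ‖Xb - Z i j‖)]
      calc ‖u i j‖ ^ 2 ≤ L ^ 2 * ‖X i - Z i j‖ ^ 2 := hsq1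
        _ ≤ L ^ 2 * (2 * ‖X i - Xb‖ ^ 2 + 2 * ‖Xb - Z i j‖ ^ 2) :=
            mul_le_mul_of_nonneg_left hsq2 (sq_nonneg L)
        _ = 2 * L ^ 2 * ‖X i - Xb‖ ^ 2 + 2 * L ^ 2 * ‖Xb - Z i j‖ ^ 2 := by ring
    have hmpos : (0:ℝ) < (m : ℝ)⁻¹ := by positivity
    exact mul_le_mul_of_nonneg_left (le_trans hle1 hle2) hmpos.le
  -- assemble
  have hnorm : ((n : ℝ)⁻¹) ^ 2 * ‖∑ i, abar i‖ ^ 2 = ‖gradfbar f X‖ ^ 2 := by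
    have : gradfbar f X = (n : ℝ)⁻¹ • ∑ i, abar i := by
      rw [gradfbar, Finset.sum_congr rfl fun i _ => (habar i).symm]
    rw [this, norm_smul, Real.norm_eq_abs, abs_of_nonneg (by positivity), mul_pow]
  have key : ((n : ℝ)⁻¹) ^ 2 * ∑ i, ∑ i', ∑ j, ∑ j',
      (if i = i' then (if j = j' then (m : ℝ)⁻¹ else 0) else (m : ℝ)⁻¹ * (m : ℝ)⁻¹)
        * ⟪a i j, a i' j'⟫
      ≤ ‖gradfbar f X‖ ^ 2 + ((n : ℝ)⁻¹) ^ 2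
          * ∑ i, ((m : ℝ)⁻¹ * ∑ j, (2 * L ^ 2 * ‖X i - Xb‖ ^ 2
              + 2 * L ^ 2 * ‖Xb - Z i j‖ ^ 2)) := by
    rw [hsplit, mul_add, hnorm]
    have := Finset.sum_le_sum fun i (_ : i ∈ Finset.univ) => hD i
    have h7 : (0:ℝ) ≤ ((n : ℝ)⁻¹) ^ 2 := by positivity
    nlinarith [mul_le_mul_of_nonneg_left this h7]
  refine le_trans key ?_
  -- now an exact identity
  have hsimp : ∀ i : Fin n, (m : ℝ)⁻¹ * ∑ j, (2 * L ^ 2 * ‖X i - Xb‖ ^ 2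
      + 2 * L ^ 2 * ‖Xb - Z i j‖ ^ 2)
      = 2 * L ^ 2 * ‖X i - Xb‖ ^ 2 + 2 * L ^ 2 * ((m : ℝ)⁻¹ * ∑ j, ‖Xb - Z i j‖ ^ 2) := by
    intro i
    rw [Finset.sum_add_distrib, Finset.sum_const, Finset.card_univ, Fintype.card_fin,
      nsmul_eq_mul, ← Finset.mul_sum, mul_add]
    field_simp
  rw [Finset.sum_congr rfl fun i _ => hsimp i, Finset.sum_add_distrib]
  rw [← Finset.mul_sum, ← Finset.mul_sum]
  have hcons : consSq X = ∑ i, ‖X i - Xb‖ ^ 2 := rfl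
  have htaux : tAux Xb Z = (n : ℝ)⁻¹ * ∑ i, ((m : ℝ)⁻¹ * ∑ j, ‖Xb - Z i j‖ ^ 2) := rfl
  rw [mul_add]
  have e1 : ((n : ℝ)⁻¹) ^ 2 * (2 * L ^ 2 * ∑ i, ‖X i - Xb‖ ^ 2)
      = 2 * L ^ 2 / n ^ 2 * consSq X := by
    rw [hcons]; ring
  have e2 : ((n : ℝ)⁻¹) ^ 2 * (2 * L ^ 2 * ∑ i, ((m : ℝ)⁻¹ * ∑ j, ‖Xb - Z i j‖ ^ 2))
      = 2 * L ^ 2 / n * tAux Xb Z := by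
    rw [htaux]; ring
  rw [e1, e2]
  linarith


section Meas

variable {Ω : Type} [MeasurableSpace Ω] {n m p : ℕ}

lemma gtFilt_mono {τ s : Fin n → ℕ → Ω → Fin m} {k k' : ℕ} (h : k ≤ k') :
    gtFilt τ s k ≤ gtFilt τ s k' := by
  refine iSup_le fun i => iSup_le fun t => iSup_le fun ht => ?_
  exact le_iSup_of_le i (le_iSup_of_le t (le_iSup_of_le (lt_of_lt_of_le ht h) le_rfl))

lemma tau_comap_le {τ s : Fin n → ℕ → Ω → Fin m} {k t : ℕ} (ht : t < k) (i : Fin n) :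
    MeasurableSpace.comap (τ i t) ⊤ ≤ gtFilt τ s k :=
  le_trans le_sup_left (le_iSup_of_le i (le_iSup_of_le t (le_iSup_of_le ht le_rfl)))

lemma sigma_comap_le {τ s : Fin n → ℕ → Ω → Fin m} {k t : ℕ} (ht : t < k) (i : Fin n) :
    MeasurableSpace.comap (s i t) ⊤ ≤ gtFilt τ s k :=
  le_trans le_sup_right (le_iSup_of_le i (le_iSup_of_le t (le_iSup_of_le ht le_rfl)))

lemma tau_meas_filt {τ s : Fin n → ℕ → Ω → Fin m} {k t : ℕ} (ht : t < k) (i : Fin n) :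
    Measurable[gtFilt τ s k] (τ i t) :=
  measurable_iff_comap_le.mpr (tau_comap_le ht i)

lemma sigma_meas_filt {τ s : Fin n → ℕ → Ω → Fin m} {k t : ℕ} (ht : t < k) (i : Fin n) :
    Measurable[gtFilt τ s k] (s i t) :=
  measurable_iff_comap_le.mpr (sigma_comap_le ht i)

lemma gtFilt_le {τ s : Fin n → ℕ → Ω → Fin m} {k : ℕ}
    (hτmeas : ∀ i k, Measurable (τ i k)) (hsmeas : ∀ i k, Measurable (s i k)) :
    gtFilt τ s k ≤ ‹MeasurableSpace Ω› := by
  refine iSup_le fun i => iSup_le fun t => iSup_le fun _ => sup_le ?_ ?_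
  · exact measurable_iff_comap_le.mp (hτmeas i t)
  · exact measurable_iff_comap_le.mp (hsmeas i t)

lemma iter_meas
    (f : Fin n → Fin m → EuclideanSpace ℝ (Fin p) → ℝ)
    (hgradc : ∀ i j, Continuous (gradient (f i j)))
    (w : Matrix (Fin n) (Fin n) ℝ) (α : ℝ)
    (τ s : Fin n → ℕ → Ω → Fin m)
    (x y g : ℕ → Fin n → Ω → EuclideanSpace ℝ (Fin p))
    (z : ℕ → Fin n → Fin m → Ω → EuclideanSpace ℝ (Fin p))
    (x0 : EuclideanSpace ℝ (Fin p))
    (hx0 : ∀ i ω, x 0 i ω = x0)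
    (hz0 : ∀ i j ω, z 0 i j ω = x0)
    (hy0 : ∀ i ω, y 0 i ω = 0)
    (hgdef : ∀ k i ω, g k i ω =
      gradient (f i (τ i k ω)) (x k i ω) - gradient (f i (τ i k ω)) (z k i (τ i k ω) ω)
        + (m : ℝ)⁻¹ • ∑ j, gradient (f i j) (z k i j ω))
    (hydef : ∀ k i ω, y (k + 1) i ω =
      ∑ r, w i r • (y k r ω + g k r ω - (if k = 0 then 0 else g (k - 1) r ω)))
    (hxdef : ∀ k i ω, x (k + 1) i ω = ∑ r, w i r • (x k r ω - α • y (k + 1) r ω)) :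
    ∀ (hzdef : ∀ k i j ω, z (k + 1) i j ω = if j = s i k ω then x k i ω else z k i j ω)
    (k : ℕ), (∀ i, Measurable[gtFilt τ s k] (x k i))
      ∧ (∀ i j, Measurable[gtFilt τ s k] (z k i j))
      ∧ (∀ i, Measurable[gtFilt τ s k] (y k i)) := by
  intro hzdef
  -- measurability of the estimator, given measurability at time t
  have hg_meas : ∀ t, (∀ i, Measurable[gtFilt τ s t] (x t i)) →
      (∀ i j, Measurable[gtFilt τ s t] (z t i j)) →
      ∀ i, Measurable[gtFilt τ s (t + 1)] (g t i) := by
    intro t hx hz i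
    have hτ : Measurable[gtFilt τ s (t + 1)] (τ i t) := tau_meas_filt (Nat.lt_succ_self t) i
    have hxl : Measurable[gtFilt τ s (t + 1)] (x t i) :=
      (hx i).mono (gtFilt_mono (Nat.le_succ t)) le_rfl
    have hzl : ∀ j, Measurable[gtFilt τ s (t + 1)] (z t i j) := fun j =>
      (hz i j).mono (gtFilt_mono (Nat.le_succ t)) le_rfl
    have hrepr : g t i = fun ω =>
        (∑ j, if τ i t ω = j then
          (gradient (f i j) (x t i ω) - gradient (f i j) (z t i j ω)) else 0)
          + (m : ℝ)⁻¹ • ∑ j, gradient (f i j) (z t i j ω) := by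
      funext ω
      rw [hgdef t i ω,
        Finset.sum_ite_eq Finset.univ (τ i t ω)
          (fun j => gradient (f i j) (x t i ω) - gradient (f i j) (z t i j ω)),
        if_pos (Finset.mem_univ _)]
    rw [hrepr]
    refine Measurable.add ?_ ?_
    · refine Finset.measurable_sum _ fun j _ => ?_
      refine Measurable.ite ?_ ?_ measurable_const
      · exact hτ (MeasurableSet.singleton j)
      · exact ((hgradc i j).measurable.comp hxl).sub ((hgradc i j).measurable.comp (hzl j))
    · exact Measurable.fun_const_smul
        (Finset.measurable_sum _ fun j _ => (hgradc i j).measurable.comp (hzl j)) _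
  intro k
  induction k using Nat.strong_induction_on with
  | _ k ih =>
    match k with
    | 0 =>
      refine ⟨fun i => ?_, fun i j => ?_, fun i => ?_⟩
      · have : x 0 i = fun _ => x0 := funext (hx0 i)
        rw [this]; exact measurable_const
      · have : z 0 i j = fun _ => x0 := funext (hz0 i j)
        rw [this]; exact measurable_const
      · have : y 0 i = fun _ => 0 := funext (hy0 i)
        rw [this]; exact measurable_const
    | Nat.succ k =>
      obtain ⟨hxk, hzk, hyk⟩ := ih k (Nat.lt_succ_self k)
      have hgk : ∀ i, Measurable[gtFilt τ s (k + 1)] (g k i) := hg_meas k hxk hzk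
      have hgprev : ∀ i, Measurable[gtFilt τ s (k + 1)]
          (fun ω => if k = 0 then (0 : EuclideanSpace ℝ (Fin p)) else g (k - 1) i ω) := by
        intro i
        match k with
        | 0 => simp only [if_pos rfl]; exact measurable_const
        | Nat.succ l =>
          simp only [Nat.succ_ne_zero, if_false, Nat.succ_sub_one]
          obtain ⟨hxl, hzl, _⟩ := ih l (by omega)
          exact (hg_meas l hxl hzl i).mono (gtFilt_mono (by omega)) le_rfl
      have hyk1 : ∀ i, Measurable[gtFilt τ s (k + 1)] (y (k + 1) i) := by
        intro i
        have : y (k + 1) i = fun ω =>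
            ∑ r, w i r • (y k r ω + g k r ω - (if k = 0 then 0 else g (k - 1) r ω)) :=
          funext (hydef k i)
        rw [this]
        refine Finset.measurable_sum _ fun r _ => Measurable.fun_const_smul ?_ _
        exact (((hyk r).mono (gtFilt_mono (Nat.le_succ k)) le_rfl).add (hgk r)).sub (hgprev r)
      refine ⟨fun i => ?_, fun i j => ?_, hyk1⟩
      · have : x (k + 1) i = fun ω => ∑ r, w i r • (x k r ω - α • y (k + 1) r ω) :=
          funext (hxdef k i)
        rw [this]
        refine Finset.measurable_sum _ fun r _ => Measurable.fun_const_smul ?_ _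
        exact ((hxk r).mono (gtFilt_mono (Nat.le_succ k)) le_rfl).sub
          ((hyk1 r).const_smul α)
      · have : z (k + 1) i j = fun ω => if j = s i k ω then x k i ω else z k i j ω :=
          funext (hzdef k i j)
        rw [this]
        have hs : Measurable[gtFilt τ s (k + 1)] (s i k) := sigma_meas_filt (Nat.lt_succ_self k) i
        refine Measurable.ite ?_ ((hxk i).mono (gtFilt_mono (Nat.le_succ k)) le_rfl)
          ((hzk i j).mono (gtFilt_mono (Nat.le_succ k)) le_rfl)
        exact hs (by trivial : MeasurableSet[⊤] {a : Fin m | j = a})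

end Meas

section Indep

variable {Ω : Type} [MeasurableSpace Ω] {P : Measure Ω} [IsProbabilityMeasure P] {n m : ℕ}

lemma indep_mono {m1 m2 m1' m2' : MeasurableSpace Ω} (h : Indep m1 m2 P)
    (h1 : m1' ≤ m1) (h2 : m2' ≤ m2) : Indep m1' m2' P := by
  rw [Indep_iff] at h ⊢
  exact fun t1 t2 ht1 ht2 => h t1 t2 (h1 _ ht1) (h2 _ ht2)

lemma indep_pair_filt
    (τ s : Fin n → ℕ → Ω → Fin m)
    (hτmeas : ∀ i k, Measurable (τ i k)) (hsmeas : ∀ i k, Measurable (s i k))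
    (hindep : iIndepFun
      (fun (q : Fin n × ℕ × Bool) ω => if q.2.2 then τ q.1 q.2.1 ω else s q.1 q.2.1 ω) P)
    (k : ℕ) (i i' : Fin n) :
    Indep (MeasurableSpace.comap (τ i k) ⊤ ⊔ MeasurableSpace.comap (τ i' k) ⊤)
      (gtFilt τ s k) P := by
  set φ : Fin n × ℕ × Bool → Ω → Fin m :=
    fun q ω => if q.2.2 then τ q.1 q.2.1 ω else s q.1 q.2.1 ω with hφ
  have hφτ : ∀ (a : Fin n) (t : ℕ), φ (a, t, true) = τ a t := fun a t => by
    funext ω; simp [hφ]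
  have hφs : ∀ (a : Fin n) (t : ℕ), φ (a, t, false) = s a t := fun a t => by
    funext ω; simp [hφ]
  have hii : iIndep (fun q => MeasurableSpace.comap (φ q)
      (inferInstance : MeasurableSpace (Fin m))) P := (iIndepFun_iff_iIndep _ _ _).mp hindep
  have hle : ∀ q, MeasurableSpace.comap (φ q) (inferInstance : MeasurableSpace (Fin m))
      ≤ ‹MeasurableSpace Ω› := by
    intro q
    refine measurable_iff_comap_le.mp ?_
    rcases q with ⟨a, t, b⟩
    cases b
    · rw [hφs]; exact hsmeas a t
    · rw [hφτ]; exact hτmeas a t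
  have hdisj : Disjoint {q : Fin n × ℕ × Bool | q.2.1 = k} {q : Fin n × ℕ × Bool | q.2.1 < k} := by
    rw [Set.disjoint_left]
    rintro q hq1 hq2
    simp only [Set.mem_setOf_eq] at hq1 hq2
    omega
  have hbig := indep_iSup_of_disjoint hle hii hdisj
  refine indep_mono hbig ?_ ?_
  · refine sup_le ?_ ?_
    · rw [← hφτ i k]
      exact le_biSup (f := fun q => MeasurableSpace.comap (φ q) (inferInstance : MeasurableSpace (Fin m))) (show ((i, k, true) : Fin n × ℕ × Bool) ∈ {q : Fin n × ℕ × Bool | q.2.1 = k}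
        from rfl)
    · rw [← hφτ i' k]
      exact le_biSup (f := fun q => MeasurableSpace.comap (φ q) (inferInstance : MeasurableSpace (Fin m))) (show ((i', k, true) : Fin n × ℕ × Bool) ∈ {q : Fin n × ℕ × Bool | q.2.1 = k}
        from rfl)
  · refine iSup_le fun a => iSup_le fun t => iSup_le fun ht => sup_le ?_ ?_
    · rw [← hφτ a t]
      exact le_biSup (f := fun q => MeasurableSpace.comap (φ q) (inferInstance : MeasurableSpace (Fin m))) (show ((a, t, true) : Fin n × ℕ × Bool) ∈ {q : Fin n × ℕ × Bool | q.2.1 < k}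
        from ht)
    · rw [← hφs a t]
      exact le_biSup (f := fun q => MeasurableSpace.comap (φ q) (inferInstance : MeasurableSpace (Fin m))) (show ((a, t, false) : Fin n × ℕ × Bool) ∈ {q : Fin n × ℕ × Bool | q.2.1 < k}
        from ht)

lemma pair_measure
    (τ s : Fin n → ℕ → Ω → Fin m)
    (hτunif : ∀ i k j, P {ω | τ i k ω = j} = (m : ℝ≥0∞)⁻¹)
    (hindep : iIndepFun
      (fun (q : Fin n × ℕ × Bool) ω => if q.2.2 then τ q.1 q.2.1 ω else s q.1 q.2.1 ω) P)
    (k : ℕ) (i i' : Fin n) (j j' : Fin m) :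
    (P ({ω | τ i k ω = j} ∩ {ω | τ i' k ω = j'})).toReal
      = if i = i' then (if j = j' then (m : ℝ)⁻¹ else 0) else (m : ℝ)⁻¹ * (m : ℝ)⁻¹ := by
  by_cases h : i = i'
  · subst h
    by_cases hj : j = j'
    · subst hj
      rw [Set.inter_self, hτunif i k j, if_pos rfl, if_pos rfl, ENNReal.toReal_inv,
        ENNReal.toReal_natCast]
    · have hempty : {ω | τ i k ω = j} ∩ {ω | τ i k ω = j'} = ∅ := by
        ext ω
        simp only [Set.mem_inter_iff, Set.mem_setOf_eq, Set.mem_empty_iff_false, iff_false,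
          not_and]
        rintro rfl
        exact fun hc => hj hc
      rw [hempty, if_pos rfl, if_neg hj]
      simp
  · have hne : ((i, k, true) : Fin n × ℕ × Bool) ≠ (i', k, true) := by
      simp [h]
    have hIF := hindep.indepFun hne
    have hφτ : ∀ (a : Fin n),
        (fun ω => if ((a, k, true) : Fin n × ℕ × Bool).2.2 then τ a k ω else s a k ω) = τ a k := by
      intro a; funext ω; simp
    rw [hφτ i, hφτ i'] at hIF
    have := hIF.measure_inter_preimage_eq_mul {j} {j'} trivial trivial
    have hpre : ∀ (a : Fin n) (b : Fin m), τ a k ⁻¹' {b} = {ω | τ a k ω = b} := by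
      intro a b; rfl
    rw [hpre, hpre] at this
    rw [this, if_neg h, hτunif i k j, hτunif i' k j', ENNReal.toReal_mul, ENNReal.toReal_inv,
      ENNReal.toReal_natCast]

end Indep

set_option linter.unusedSectionVars false
set_option linter.unusedVariables false

lemma memLp_lip_comp {Ω : Type} [MeasurableSpace Ω] {P : Measure Ω} [IsFiniteMeasure P]
    {E F' : Type*} [NormedAddCommGroup E] [NormedAddCommGroup F']
    {φ : E → F'} {K : NNReal} (hφ : LipschitzWith K φ) {h : Ω → E}
    (hh : MemLp h 2 P) : MemLp (fun ω => φ (h ω)) 2 P := by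
  have hm : AEStronglyMeasurable (fun ω => φ (h ω)) P :=
    hφ.continuous.comp_aestronglyMeasurable hh.aestronglyMeasurable
  have hbdd : MemLp (fun ω => (K : ℝ) * ‖h ω‖ + ‖φ 0‖) 2 P :=
    (hh.norm.const_mul _).add (memLp_const _)
  refine MemLp.of_le hbdd hm (ae_of_all _ fun ω => ?_)
  have h1 : ‖φ (h ω)‖ ≤ ‖φ (h ω) - φ 0‖ + ‖φ 0‖ := by
    have := norm_add_le (φ (h ω) - φ 0) (φ 0); simpa using this
  have h2 : ‖φ (h ω) - φ 0‖ ≤ (K : ℝ) * ‖h ω‖ := by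
    have := hφ.dist_le_mul (h ω) 0
    rwa [dist_eq_norm, dist_zero_right] at this
  have h3 : ‖φ (h ω)‖ ≤ (K : ℝ) * ‖h ω‖ + ‖φ 0‖ := by linarith
  exact le_trans h3 (le_abs_self _)

set_option maxHeartbeats 2000000 in
/-- GT-SAGA: bound on the conditional second moment of the averaged SAGA estimator. -/
theorem gtsaga_avg_estimator_bound
    {Ω : Type} [MeasurableSpace Ω] (P : Measure Ω) [IsProbabilityMeasure P]
    {n m p : ℕ} (hn : 1 ≤ n) (hm : 1 ≤ m)
    (L : ℝ) (hL : 0 < L)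
    (f : Fin n → Fin m → EuclideanSpace ℝ (Fin p) → ℝ)
    (hdiff : ∀ i j, Differentiable ℝ (f i j))
    (hlip : ∀ i j, LipschitzWith L.toNNReal (gradient (f i j)))
    (hFbdd : BddBelow (Set.range (fglob f)))
    (w : Matrix (Fin n) (Fin n) ℝ)
    (hrow : ∀ i, ∑ r, w i r = 1) (hcol : ∀ r, ∑ i, w i r = 1)
    (lam : ℝ) (hlam : lam = secondSV w) (hlam0 : 0 ≤ lam) (hlam1 : lam < 1)
    (τ s : Fin n → ℕ → Ω → Fin m)
    (hτmeas : ∀ i k, Measurable (τ i k)) (hsmeas : ∀ i k, Measurable (s i k))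
    (hτunif : ∀ i k j, P {ω | τ i k ω = j} = (m : ℝ≥0∞)⁻¹)
    (hsunif : ∀ i k j, P {ω | s i k ω = j} = (m : ℝ≥0∞)⁻¹)
    (hindep : iIndepFun
      (fun (q : Fin n × ℕ × Bool) ω => if q.2.2 then τ q.1 q.2.1 ω else s q.1 q.2.1 ω) P)
    (α : ℝ) (hα0 : 0 < α)
    (x y g : ℕ → Fin n → Ω → EuclideanSpace ℝ (Fin p))
    (z : ℕ → Fin n → Fin m → Ω → EuclideanSpace ℝ (Fin p))
    (x0 : EuclideanSpace ℝ (Fin p))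
    (hx0 : ∀ i ω, x 0 i ω = x0)
    (hz0 : ∀ i j ω, z 0 i j ω = x0)
    (hy0 : ∀ i ω, y 0 i ω = 0)
    (hgdef : ∀ k i ω, g k i ω =
      gradient (f i (τ i k ω)) (x k i ω) - gradient (f i (τ i k ω)) (z k i (τ i k ω) ω)
        + (m : ℝ)⁻¹ • ∑ j, gradient (f i j) (z k i j ω))
    (hydef : ∀ k i ω, y (k + 1) i ω =
      ∑ r, w i r • (y k r ω + g k r ω - (if k = 0 then 0 else g (k - 1) r ω)))
    (hxdef : ∀ k i ω, x (k + 1) i ω = ∑ r, w i r • (x k r ω - α • y (k + 1) r ω))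
    (hzdef : ∀ k i j ω, z (k + 1) i j ω = if j = s i k ω then x k i ω else z k i j ω)
    (hxL2 : ∀ k i, MemLp (x k i) 2 P)
    (hyL2 : ∀ k i, MemLp (y k i) 2 P)
    (hgL2 : ∀ k i, MemLp (g k i) 2 P)
    (hzL2 : ∀ k i j, MemLp (z k i j) 2 P)
    (k : ℕ) :
    ∀ᵐ ω ∂P,
      (P[fun ω' => ‖blockAvg (fun i => g k i ω')‖ ^ 2 | gtFilt τ s k]) ω
        ≤ 2 * L ^ 2 / n ^ 2 * consSq (fun i => x k i ω)
          + 2 * L ^ 2 / n * tAux (blockAvg (fun i => x k i ω)) (fun i j => z k i j ω)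
          + ‖gradfbar f (fun i => x k i ω)‖ ^ 2 := by
  classical
  have hL0 : (0:ℝ) ≤ L := hL.le
  have hFle : gtFilt τ s k ≤ ‹MeasurableSpace Ω› := gtFilt_le hτmeas hsmeas
  obtain ⟨hxm, hzm, -⟩ := iter_meas f (fun i j => (hlip i j).continuous) w α τ s x y g z x0
    hx0 hz0 hy0 hgdef hydef hxdef hzdef k
  -- the per-sample estimator candidates
  set G : Fin n → Fin m → Ω → EuclideanSpace ℝ (Fin p) := fun i j ω =>
    gradient (f i j) (x k i ω) - gradient (f i j) (z k i j ω)
      + (m : ℝ)⁻¹ • ∑ j', gradient (f i j') (z k i j' ω) with hGdef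
  have hgG : ∀ i ω, g k i ω = G i (τ i k ω) ω := fun i ω => hgdef k i ω
  have hlipn : ∀ (i : Fin n) (j : Fin m) (a b : EuclideanSpace ℝ (Fin p)),
      ‖gradient (f i j) a - gradient (f i j) b‖ ≤ L * ‖a - b‖ := by
    intro i j a b
    have := (hlip i j).dist_le_mul a b
    rwa [dist_eq_norm, dist_eq_norm, Real.coe_toNNReal _ hL0] at this
  have hGmeasF : ∀ i j, Measurable[gtFilt τ s k] (G i j) := by
    intro i j
    exact (((hlip i j).continuous.measurable.comp (hxm i)).sub
        ((hlip i j).continuous.measurable.comp (hzm i j))).add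
      (Measurable.fun_const_smul
        (Finset.measurable_sum _ fun j' _ => (hlip i j').continuous.measurable.comp (hzm i j')) _)
  have hGaesm : ∀ i j, AEStronglyMeasurable (G i j) P := fun i j =>
    (((hGmeasF i j).mono hFle le_rfl).stronglyMeasurable).aestronglyMeasurable
  have hGL2 : ∀ i j, MemLp (G i j) 2 P := by
    intro i j
    have h3 : MemLp (fun ω => (m : ℝ)⁻¹ • ∑ j', gradient (f i j') (z k i j' ω)) 2 P := by
      have h4 := (memLp_finset_sum' Finset.univ
        (fun (j' : Fin m) (_ : j' ∈ Finset.univ) =>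
          memLp_lip_comp (hlip i j') (hzL2 k i j'))).const_smul ((m : ℝ)⁻¹)
      have heq : ((m : ℝ)⁻¹ • ∑ j', fun ω => gradient (f i j') (z k i j' ω))
          = fun ω => (m : ℝ)⁻¹ • ∑ j', gradient (f i j') (z k i j' ω) := by
        funext ω
        simp [Finset.sum_apply]
      rwa [heq] at h4
    exact ((memLp_lip_comp (hlip i j) (hxL2 k i)).sub
        (memLp_lip_comp (hlip i j) (hzL2 k i j))).add h3
  have hGsq : ∀ i j, Integrable (fun ω => ‖G i j ω‖ ^ 2) P := fun i j =>
    (memLp_two_iff_integrable_sq_norm (hGaesm i j)).mp (hGL2 i j)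
  -- indicator functions
  set I : Fin n → Fin m → Ω → ℝ := fun i j ω => if τ i k ω = j then 1 else 0 with hIdef
  have hImeas : ∀ i j, Measurable (I i j) := fun i j =>
    Measurable.ite ((hτmeas i k) (measurableSet_singleton j)) measurable_const measurable_const
  have hIabs : ∀ i j ω, |I i j ω| ≤ 1 := by
    intro i j ω
    simp only [hIdef]
    split_ifs <;> simp
  have hInonneg : ∀ i j ω, 0 ≤ I i j ω := by
    intro i j ω
    simp only [hIdef]
    split_ifs <;> simp
  set c : Fin n → Fin n → Fin m → Fin m → ℝ := fun i i' j j' =>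
    (P ({ω | τ i k ω = j} ∩ {ω | τ i' k ω = j'})).toReal with hcdef
  have hcval : ∀ i i' j j', c i i' j j'
      = if i = i' then (if j = j' then (m : ℝ)⁻¹ else 0) else (m : ℝ)⁻¹ * (m : ℝ)⁻¹ :=
    fun i i' j j' => pair_measure τ s hτunif hindep k i i' j j'
  -- the summands
  set ψ : (Fin n × Fin n) × Fin m × Fin m → Ω → ℝ := fun q ω =>
    ⟪G q.1.1 q.2.1 ω, G q.1.2 q.2.2 ω⟫ * (I q.1.1 q.2.1 ω * I q.1.2 q.2.2 ω) with hψdef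
  have hinner_meas : ∀ i j i' j', AEStronglyMeasurable (fun ω => ⟪G i j ω, G i' j' ω⟫) P := by
    intro i j i' j'
    exact (Measurable.inner ((hGmeasF i j).mono hFle le_rfl)
      ((hGmeasF i' j').mono hFle le_rfl)).aestronglyMeasurable
  have hbound : ∀ (i j i' j' : _) ω, |⟪G i j ω, G i' j' ω⟫|
      ≤ ‖G i j ω‖ ^ 2 + ‖G i' j' ω‖ ^ 2 := by
    intro i j i' j' ω
    have h1 := abs_real_inner_le_norm (G i j ω) (G i' j' ω)
    nlinarith [sq_nonneg (‖G i j ω‖ - ‖G i' j' ω‖), norm_nonneg (G i j ω),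
      norm_nonneg (G i' j' ω)]
  have hinner_int : ∀ i j i' j', Integrable (fun ω => ⟪G i j ω, G i' j' ω⟫) P := by
    intro i j i' j'
    refine Integrable.mono' ((hGsq i j).add (hGsq i' j')) (hinner_meas i j i' j')
      (ae_of_all _ fun ω => ?_)
    rw [Real.norm_eq_abs]
    exact hbound i j i' j' ω
  have hIint : ∀ i j i' j', Integrable (fun ω => I i j ω * I i' j' ω) P := by
    intro i j i' j'
    refine Integrable.mono' (integrable_const (1:ℝ)) (((hImeas i j).mul
      (hImeas i' j')).aestronglyMeasurable) (ae_of_all _ fun ω => ?_)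
    rw [Real.norm_eq_abs, abs_mul]
    exact mul_le_one₀ (hIabs i j ω) (abs_nonneg _) (hIabs i' j' ω)
  have hψint : ∀ q : (Fin n × Fin n) × Fin m × Fin m, Integrable (ψ q) P := by
    rintro ⟨⟨i, i'⟩, j, j'⟩
    refine Integrable.mono' ((hGsq i j).add (hGsq i' j'))
      ((hinner_meas i j i' j').mul (((hImeas i j).mul
        (hImeas i' j')).aestronglyMeasurable)) (ae_of_all _ fun ω => ?_)
    simp only [hψdef, Real.norm_eq_abs, abs_mul]
    have h2 : |I i j ω| * |I i' j' ω| ≤ 1 :=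
      mul_le_one₀ (hIabs i j ω) (abs_nonneg _) (hIabs i' j' ω)
    have h3 := hbound i j i' j' ω
    have h4 : (0:ℝ) ≤ |⟪G i j ω, G i' j' ω⟫| := abs_nonneg _
    calc |⟪G i j ω, G i' j' ω⟫| * (|I i j ω| * |I i' j' ω|)
        ≤ |⟪G i j ω, G i' j' ω⟫| * 1 := by
          exact mul_le_mul_of_nonneg_left h2 h4
      _ = |⟪G i j ω, G i' j' ω⟫| := mul_one _
      _ ≤ ‖G i j ω‖ ^ 2 + ‖G i' j' ω‖ ^ 2 := h3
  -- conditional expectation of the indicator pair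
  have hcond_ind : ∀ i i' j j', P[fun ω => I i j ω * I i' j' ω|gtFilt τ s k]
      =ᵐ[P] fun _ => c i i' j j' := by
    intro i i' j j'
    have hm1le : (MeasurableSpace.comap (τ i k) ⊤ ⊔ MeasurableSpace.comap (τ i' k) ⊤)
        ≤ ‹MeasurableSpace Ω› :=
      sup_le (measurable_iff_comap_le.mp (hτmeas i k)) (measurable_iff_comap_le.mp (hτmeas i' k))
    have hS1 : MeasurableSet[MeasurableSpace.comap (τ i k) ⊤
        ⊔ MeasurableSpace.comap (τ i' k) ⊤] {ω | τ i k ω = j} :=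
      (le_sup_left : MeasurableSpace.comap (τ i k) ⊤ ≤ _) _ ⟨{j}, trivial, rfl⟩
    have hS2 : MeasurableSet[MeasurableSpace.comap (τ i k) ⊤
        ⊔ MeasurableSpace.comap (τ i' k) ⊤] {ω | τ i' k ω = j'} :=
      (le_sup_right : MeasurableSpace.comap (τ i' k) ⊤ ≤ _) _ ⟨{j'}, trivial, rfl⟩
    have hindSM : StronglyMeasurable[MeasurableSpace.comap (τ i k) ⊤
        ⊔ MeasurableSpace.comap (τ i' k) ⊤] (fun ω => I i j ω * I i' j' ω) := by
      refine Measurable.stronglyMeasurable ?_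
      exact (Measurable.ite hS1 measurable_const measurable_const).mul
        (Measurable.ite hS2 measurable_const measurable_const)
    have heq := condExp_indep_eq hm1le hFle hindSM
      (indep_pair_filt τ s hτmeas hsmeas hindep k i i')
    refine heq.trans ?_
    have hval : ∫ ω, I i j ω * I i' j' ω ∂P = c i i' j j' := by
      have hrepr : (fun ω => I i j ω * I i' j' ω)
          = Set.indicator ({ω | τ i k ω = j} ∩ {ω | τ i' k ω = j'}) (fun _ => (1:ℝ)) := by
        funext ω
        simp only [hIdef, Set.indicator_apply, Set.mem_inter_iff, Set.mem_setOf_eq]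
        by_cases h1 : τ i k ω = j <;> by_cases h2 : τ i' k ω = j' <;> simp [h1, h2]
      rw [hrepr, integral_indicator_const, smul_eq_mul, mul_one, hcdef]
      · rfl
      exact ((hτmeas i k) (measurableSet_singleton j)).inter
        ((hτmeas i' k) (measurableSet_singleton j'))
    rw [hval]
  -- conditional expectation of each summand
  have hcond_ψ : ∀ q : (Fin n × Fin n) × Fin m × Fin m, P[ψ q|gtFilt τ s k] =ᵐ[P]
      fun ω => ⟪G q.1.1 q.2.1 ω, G q.1.2 q.2.2 ω⟫ * c q.1.1 q.1.2 q.2.1 q.2.2 := by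
    rintro ⟨⟨i, i'⟩, j, j'⟩
    have hf : StronglyMeasurable[gtFilt τ s k] (fun ω => ⟪G i j ω, G i' j' ω⟫) :=
      Measurable.stronglyMeasurable (Measurable.inner (hGmeasF i j) (hGmeasF i' j'))
    have h1 := condExp_mul_of_stronglyMeasurable_left hf (hψint ⟨⟨i, i'⟩, j, j'⟩) (hIint i j i' j')
    refine h1.trans ?_
    filter_upwards [hcond_ind i i' j j'] with ω hω
    simp only [Pi.mul_apply, hω]
  -- pointwise representation of the squared norm
  have hpoint : (fun ω' => ‖blockAvg (fun i => g k i ω')‖ ^ 2)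
      = ((n : ℝ)⁻¹) ^ 2 • ∑ q : (Fin n × Fin n) × Fin m × Fin m, ψ q := by
    funext ω
    have h2 : ∀ i i', ∑ j, ∑ j', ψ ((i, i'), (j, j')) ω = ⟪g k i ω, g k i' ω⟫ := by
      intro i i'
      rw [hgG i ω, hgG i' ω]
      simp only [hψdef, hIdef, mul_ite, ite_mul, one_mul, mul_one, zero_mul, mul_zero,
        Finset.sum_ite_irrel, Finset.sum_const_zero, Finset.sum_ite_eq, Finset.mem_univ,
        if_true]
    have h3 : ∑ q : (Fin n × Fin n) × Fin m × Fin m, ψ q ω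
        = ∑ i, ∑ i', ⟪g k i ω, g k i' ω⟫ := by
      rw [Fintype.sum_prod_type]
      rw [Fintype.sum_prod_type]
      refine Finset.sum_congr rfl fun i _ => Finset.sum_congr rfl fun i' _ => ?_
      rw [← h2 i i']
      rw [Fintype.sum_prod_type]
    have h1 : blockAvg (fun i => g k i ω) = (n : ℝ)⁻¹ • ∑ i, g k i ω := by
      simp only [blockAvg]
    rw [Pi.smul_apply, Finset.sum_apply, smul_eq_mul, h3, h1, norm_smul, Real.norm_eq_abs,
      abs_of_nonneg (by positivity : (0:ℝ) ≤ (n:ℝ)⁻¹), mul_pow, norm_sum_sq_eq]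
  rw [hpoint]
  -- assemble the conditional expectation
  have hce1 := condExp_smul (m := gtFilt τ s k) (μ := P) (((n : ℝ)⁻¹) ^ 2)
    (∑ q : (Fin n × Fin n) × Fin m × Fin m, ψ q)
  have hce2 := condExp_finsetSum (μ := P) (m := gtFilt τ s k)
    (fun (q : (Fin n × Fin n) × Fin m × Fin m) (_ : q ∈ Finset.univ) => hψint q)
  have hq_all : ∀ᵐ ω ∂P, ∀ q : (Fin n × Fin n) × Fin m × Fin m,
      (P[ψ q|gtFilt τ s k]) ω = ⟪G q.1.1 q.2.1 ω, G q.1.2 q.2.2 ω⟫ * c q.1.1 q.1.2 q.2.1 q.2.2 :=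
    ae_all_iff.mpr hcond_ψ
  filter_upwards [hce1, hce2, hq_all] with ω h1 h2 h3
  rw [h1, Pi.smul_apply, h2, smul_eq_mul, Finset.sum_apply]
  have hsum_eq : ∑ q : (Fin n × Fin n) × Fin m × Fin m, (P[ψ q|gtFilt τ s k]) ω
      = ∑ i, ∑ i', ∑ j, ∑ j',
        (if i = i' then (if j = j' then (m : ℝ)⁻¹ else 0) else (m : ℝ)⁻¹ * (m : ℝ)⁻¹)
          * ⟪G i j ω, G i' j' ω⟫ := by
    rw [Fintype.sum_prod_type, Fintype.sum_prod_type]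
    refine Finset.sum_congr rfl fun i _ => Finset.sum_congr rfl fun i' _ => ?_
    rw [Fintype.sum_prod_type]
    refine Finset.sum_congr rfl fun j _ => Finset.sum_congr rfl fun j' _ => ?_
    rw [h3 ((i, i'), (j, j')), hcval i i' j j', mul_comm]
  rw [hsum_eq]
  exact detStep hn hm L hL0 f hdiff hlipn (fun i => x k i ω) (fun i j => z k i j ω)
    (fun i j => G i j ω) (fun i j => rfl)

end
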